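/- For every n ≥ 4, the partition (n−2, 2) of n satisfies (n−3)·η_{(n−2,2)} = (n−1)·D_{n−2}; in particular η_{(n−2,2)} > 0. Moreover, for every n ≥ 6, |η_{(n−2,2)}| > |η_{(n−2,1,1)}|. -/

import Mathlib

/-- Derangement numbers: `D 0 = 1`, `D (m+1) = (m+1) * D m + (-1)^(m+1)`. -/
def derange : ℕ → ℤ
  | 0 => 1
  | n + 1 => (n + 1 : ℤ) * derange n + (-1) ^ (n + 1)

/-- Subtract one from every part and discard the parts that become zero
(deleting the first column of the Ferrers diagram). -/
def strip (l : List ℕ) : List ℕ := (l.map (· - 1)).filter (fun x => 0 < x)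

lemma strip_measure (l : List ℕ) : (strip l).sum + (strip l).length ≤ l.sum := by
  induction l with
  | nil => simp [strip]
  | cons x t ih =>
      simp only [strip, List.map_cons, List.filter_cons] at ih ⊢
      by_cases hx : 0 < x - 1 <;> simp [hx] <;> omega

/-- The eigenvalues of the derangement graph, defined by Renteln's recurrence:
`η ∅ = 1` and `η λ = (-1)^h (η (λ-ĥ) + (-1)^{λ₁} h η (λ-ĉ))`, where
`h = λ₁ + r - 1` is the hook size, `λ-ĥ = strip (tail λ)` removes the hook,
and `λ-ĉ = strip λ` removes the first column. -/
def eta : List ℕ → ℤ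
  | [] => 1
  | a :: t =>
      (-1) ^ (a + t.length) *
        (eta (strip t) + (-1) ^ a * ((a : ℤ) + t.length) * eta (strip (a :: t)))
  termination_by l => l.sum + l.length
  decreasing_by
  · have h1 := strip_measure t
    simp only [List.sum_cons, List.length_cons]
    omega
  · have h1 := strip_measure (a :: t)
    simp only [List.sum_cons, List.length_cons] at h1 ⊢
    omega

/-- `l` is (the list of parts of) a partition of `n`: weakly decreasing,
all parts positive, summing to `n`. -/
def IsPartition (n : ℕ) (l : List ℕ) : Prop :=
  l.Pairwise (· ≥ ·) ∧ (∀ x ∈ l, 0 < x) ∧ l.sum = n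

/-- The hook partition `(a, 1^(n-a))` of `n`. -/
def hookP (n a : ℕ) : List ℕ := a :: List.replicate (n - a) 1

lemma eta_nil : eta [] = 1 := by rw [eta]

lemma eta_cons (a : ℕ) (t : List ℕ) : eta (a :: t) =
    (-1) ^ (a + t.length) *
      (eta (strip t) + (-1) ^ a * ((a : ℤ) + t.length) * eta (strip (a :: t))) := by
  rw [eta]

lemma derange_succ (m : ℕ) :
    derange (m + 1) = (m + 1 : ℤ) * derange m + (-1) ^ (m + 1) := rfl

lemma neg_one_sq' (b : ℕ) : ((-1 : ℤ) ^ b) * ((-1 : ℤ) ^ b) = 1 := by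
  rw [← pow_add]
  exact Even.neg_one_pow ⟨b, by ring⟩

lemma neg_one_succ (b : ℕ) : ((-1 : ℤ) ^ (b + 1)) = -((-1 : ℤ) ^ b) := by
  rw [pow_succ]; ring

lemma derange_ge_one : ∀ m, 1 ≤ derange (m + 2) := by
  intro m
  induction m with
  | zero => norm_num [derange]
  | succ k ih =>
      rw [derange_succ]
      rcases neg_one_pow_eq_or ℤ (k + 2 + 1) with h | h <;> rw [h] <;>
        push_cast <;> nlinarith

lemma derange_nonneg : ∀ m, 0 ≤ derange m
  | 0 => by norm_num [derange]
  | 1 => by norm_num [derange]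
  | (m + 2) => le_trans zero_le_one (derange_ge_one m)

lemma eta_single : ∀ m, eta [m] = derange m := by
  intro m
  induction m with
  | zero =>
      rw [eta_cons]
      norm_num [strip, eta_nil, derange]
  | succ k ih =>
      rw [eta_cons]
      have hs : strip [k + 1] = if k = 0 then [] else [k] := by
        cases k <;> simp [strip]
      cases k with
      | zero =>
          simp only [hs, if_pos rfl]
          norm_num [strip, eta_nil, derange]
      | succ j =>
          simp only [hs, if_neg (Nat.succ_ne_zero j)] at *
          rw [derange_succ, ih]
          simp only [strip, List.length_nil, List.map_nil, List.filter_nil, eta_nil,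
            Nat.add_zero, Nat.cast_zero, add_zero]
          rcases neg_one_pow_eq_or ℤ j with h | h <;>
            simp only [pow_add, pow_succ, pow_zero, pow_one, h] <;> push_cast <;> ring

lemma eta_hook2 (b : ℕ) : eta [b + 1, 1] = (-1) ^ b - ((b : ℤ) + 2) * derange b := by
  rw [eta_cons]
  have hs : strip [b + 1, 1] = if b = 0 then [] else [b] := by
    cases b <;> simp [strip]
  have hs1 : strip [1] = [] := by simp [strip]
  cases b with
  | zero =>
      simp only [hs, if_pos rfl, hs1]
      norm_num [eta_nil, derange]
  | succ j =>
      simp only [hs, if_neg (Nat.succ_ne_zero j), hs1, eta_nil, eta_single,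
        List.length_cons, List.length_nil]
      rcases neg_one_pow_eq_or ℤ j with h | h <;>
        simp only [pow_add, pow_succ, pow_zero, pow_one, h] <;> push_cast <;> ring

lemma eta_pair (b : ℕ) :
    eta [b + 2, 2] = ((b : ℤ) + 3) * (((b : ℤ) + 2) * derange b - (-1) ^ b) := by
  rw [eta_cons]
  have hs : strip [b + 2, 2] = [b + 1, 1] := by simp [strip]
  have hs2 : strip [2] = [1] := by simp [strip]
  rw [hs, hs2, eta_hook2]
  have h1 : eta [1] = 0 := by rw [eta_single]; norm_num [derange]
  rw [h1]
  simp only [List.length_cons, List.length_nil]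
  rcases neg_one_pow_eq_or ℤ b with h | h <;>
    simp only [pow_add, pow_succ, pow_zero, pow_one, h] <;> push_cast <;> ring

lemma eta_twoones (b : ℕ) :
    eta [b + 2, 1, 1] = (-1) ^ b + ((b : ℤ) + 4) * derange (b + 1) := by
  rw [eta_cons]
  have hs : strip [b + 2, 1, 1] = [b + 1] := by simp [strip]
  have hs2 : strip [1, 1] = [] := by simp [strip]
  rw [hs, hs2, eta_nil, eta_single]
  simp only [List.length_cons, List.length_nil]
  rcases neg_one_pow_eq_or ℤ b with h | h <;>
    simp only [pow_add, pow_succ, pow_zero, pow_one, h] <;> push_cast <;> ring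

lemma key_pos (b : ℕ) : 1 ≤ ((b : ℤ) + 2) * derange b - (-1) ^ b := by
  match b with
  | 0 => norm_num [derange]
  | 1 => norm_num [derange, neg_one_succ]
  | (j + 2) =>
      have h1 := derange_ge_one j
      rcases neg_one_pow_eq_or ℤ (j + 2) with h | h <;> rw [h] <;> nlinarith

/-- For `n ≥ 4`, `(n-3) η_{(n-2,2)} = (n-1) D_{n-2}`, so `η_{(n-2,2)} > 0`;
for `n ≥ 6`, `|η_{(n-2,2)}| > |η_{(n-2,1,1)}|`. -/
theorem eta_n_minus_two (n : ℕ) (hn : 4 ≤ n) :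
    ((n : ℤ) - 3) * eta [n - 2, 2] = ((n : ℤ) - 1) * derange (n - 2) ∧
    0 < eta [n - 2, 2] ∧
    (6 ≤ n → |eta [n - 2, 1, 1]| < |eta [n - 2, 2]|) := by
  obtain ⟨b, rfl⟩ := Nat.exists_eq_add_of_le hn
  have h2 : 4 + b - 2 = b + 2 := by omega
  rw [h2]
  have hcast : ((4 + b : ℕ) : ℤ) = (b : ℤ) + 4 := by push_cast; ring
  rw [hcast, eta_pair]
  have hd2 : derange (b + 2) = ((b:ℤ)+2) * derange (b+1) + (-1)^(b+2) := derange_succ (b+1)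
  have hd1 : derange (b + 1) = ((b:ℤ)+1) * derange b + (-1)^(b+1) := derange_succ b
  have hkey := key_pos b
  refine ⟨?_, ?_, ?_⟩
  · rw [hd2, hd1, neg_one_succ (b+1), neg_one_succ b]
    ring
  · have : (0:ℤ) < (b:ℤ) + 3 := by positivity
    nlinarith
  · intro h6
    have hb2 : 2 ≤ b := by omega
    rw [eta_twoones]
    have hd1pos : 1 ≤ derange (b + 1) := by
      obtain ⟨j, rfl⟩ : ∃ j, b = j + 2 := ⟨b - 2, by omega⟩
      exact derange_ge_one (j + 1)
    have hdbpos : 1 ≤ derange b := by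
      obtain ⟨j, rfl⟩ : ∃ j, b = j + 2 := ⟨b - 2, by omega⟩
      exact derange_ge_one j
    have he : ((-1:ℤ)^b = 1 ∨ (-1:ℤ)^b = -1) := neg_one_pow_eq_or ℤ b
    have hpos1 : 0 < (-1:ℤ)^b + ((b:ℤ)+4) * derange (b+1) := by
      rcases he with h | h <;> rw [h] <;> nlinarith
    have hpos2 : 0 < ((b : ℤ) + 3) * (((b : ℤ) + 2) * derange b - (-1) ^ b) := by
      nlinarith
    rw [abs_of_pos hpos1, abs_of_pos hpos2, hd1, neg_one_succ b]
    rcases he with h | h <;> rw [h] at * <;> nlinarith
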